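/- For all ρ > 0 and 0 < δ < 1, ∫_0^{1-δ} t^ρ e^{-ρ t} dt ≤ (ρ δ)^{-1} · ((1-δ) e^{-1+δ})^ρ. -/

import Mathlib

theorem lower_tail_estimate (ρ δ : ℝ) (hρ : 0 < ρ) (hδ0 : 0 < δ) (hδ1 : δ < 1) :
    ∫ t in (0:ℝ)..(1 - δ), t ^ ρ * Real.exp (-ρ * t)
      ≤ (ρ * δ)⁻¹ * ((1 - δ) * Real.exp (-1 + δ)) ^ ρ := by
  set c := 1 - δ with hc
  have hc0 : 0 < c := by simp [hc]; linarith
  have hc1 : c < 1 := by simp [hc]; linarith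
  set f : ℝ → ℝ := fun t => t ^ ρ * Real.exp (-ρ * t) with hf
  set g : ℝ → ℝ := fun t => t ^ (ρ - 1) * (ρ * (1 - t) * Real.exp (-ρ * t)) with hg
  have hfc : ContinuousOn f (Set.Icc 0 c) := by
    apply ContinuousOn.mul
    · exact fun x _ => (Real.continuousAt_rpow_const x ρ (Or.inr hρ.le)).continuousWithinAt
    · exact (Real.continuous_exp.comp (continuous_const.mul continuous_id)).continuousOn
  have hfint : IntervalIntegrable f MeasureTheory.volume 0 c := by
    apply ContinuousOn.intervalIntegrable
    rwa [Set.uIcc_of_le hc0.le]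
  have hgint : IntervalIntegrable g MeasureTheory.volume 0 c := by
    apply IntervalIntegrable.mul_continuousOn
    · exact intervalIntegral.intervalIntegrable_rpow' (by linarith)
    · apply Continuous.continuousOn
      exact (continuous_const.mul (continuous_const.sub continuous_id)).mul
        (Real.continuous_exp.comp (continuous_const.mul continuous_id))
  have hderiv : ∀ t ∈ Set.Ioo (0:ℝ) c, HasDerivAt f (g t) t := by
    intro t ht
    have ht0 : 0 < t := ht.1
    have h1 : HasDerivAt (fun t : ℝ => t ^ ρ) (ρ * t ^ (ρ - 1)) t :=
      Real.hasDerivAt_rpow_const (Or.inl ht0.ne')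
    have h2 : HasDerivAt (fun t : ℝ => Real.exp (-ρ * t)) (-ρ * Real.exp (-ρ * t)) t := by
      simpa [mul_comm] using ((hasDerivAt_id t).const_mul (-ρ)).exp
    have h3 : HasDerivAt f _ t := h1.mul h2
    have ht : t ^ ρ = t ^ (ρ - 1) * t := by
      rw [← Real.rpow_add_one ht0.ne']; ring_nf
    convert h3 using 1
    simp only [hg, ht]; ring
  -- FTC
  have hftc : ∫ t in (0:ℝ)..c, g t = f c - f 0 :=
    intervalIntegral.integral_eq_sub_of_hasDeriv_right_of_le hc0.le hfc
      (fun t ht => (hderiv t ht).hasDerivWithinAt) hgint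
  have hf0 : f 0 = 0 := by simp [hf, Real.zero_rpow hρ.ne']
  -- pointwise bound f t ≤ (ρδ)⁻¹ g t on [0,c]
  have hρδ : 0 < ρ * δ := mul_pos hρ hδ0
  have hle : ∀ t ∈ Set.Icc (0:ℝ) c, f t ≤ (ρ * δ)⁻¹ * g t := by
    intro t ht
    rcases eq_or_lt_of_le ht.1 with h0 | h0
    · have : f t = 0 := by rw [← h0]; exact hf0
      rw [this]
      apply mul_nonneg (inv_nonneg.mpr hρδ.le)
      rw [hg, ← h0]
      positivity
    · rw [le_inv_mul_iff₀ hρδ, hf, hg]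
      simp only
      have ht1 : t < 1 := lt_of_le_of_lt ht.2 hc1
      have htρ : t ^ ρ = t ^ (ρ - 1) * t := by
        rw [← Real.rpow_add_one h0.ne']; ring_nf
      rw [htρ]
      have key : δ * t ≤ 1 - t := by
        have : t ≤ 1 - δ := ht.2
        nlinarith
      have hpos : (0:ℝ) ≤ t ^ (ρ - 1) := Real.rpow_nonneg h0.le _
      have hexp : (0:ℝ) < Real.exp (-ρ * t) := Real.exp_pos _
      calc ρ * δ * (t ^ (ρ - 1) * t * Real.exp (-ρ * t))
          = (δ * t) * (ρ * (t ^ (ρ - 1) * Real.exp (-ρ * t))) := by ring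
        _ ≤ (1 - t) * (ρ * (t ^ (ρ - 1) * Real.exp (-ρ * t))) := by
            apply mul_le_mul_of_nonneg_right key; positivity
        _ = t ^ (ρ - 1) * (ρ * (1 - t) * Real.exp (-ρ * t)) := by ring
  calc ∫ t in (0:ℝ)..c, f t
      ≤ ∫ t in (0:ℝ)..c, (ρ * δ)⁻¹ * g t :=
        intervalIntegral.integral_mono_on hc0.le hfint (hgint.const_mul _) hle
    _ = (ρ * δ)⁻¹ * ∫ t in (0:ℝ)..c, g t := intervalIntegral.integral_const_mul _ _
    _ = (ρ * δ)⁻¹ * f c := by rw [hftc, hf0, sub_zero]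
    _ = (ρ * δ)⁻¹ * ((1 - δ) * Real.exp (-1 + δ)) ^ ρ := by
        rw [hf, hc]
        simp only
        rw [Real.mul_rpow (by linarith) (Real.exp_pos _).le, ← Real.exp_mul]
        ring_nf
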